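/- Let (X, ν) be a general state space with a sigma-finite reference measure ν, let μ be a strictly positive probability density with respect to ν, and let Q(x,y) ≥ 0 be a measurable jump rate kernel with sup_x ∫_{y ≠ x} Q(x,y) ν(dy) < ∞. For measurable kernels Q1, Q2 define d_μ(Q1,Q2) := ∫∫_{{(x,y): x ≠ y}} μ(x)|Q1(x,y) − Q2(x,y)| ν(dx)ν(dy). Then for every measurable kernel R(x,y) ≥ 0 that is μ-reversible, i.e. μ(x)R(x,y) = μ(y)R(y,x) for ν⊗ν-almost every (x,y), one has d_μ(Q,R) ≥ d_μ(Q,M2), where M2(x,y) := max{Q(x,y), (μ(y)/μ(x))Q(y,x)}. -/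

import Mathlib

open MeasureTheory ENNReal

/-- The second Metropolis-Hastings kernel `M2(x,y) = max{Q(x,y), (μ(y)/μ(x))Q(y,x)}` minimizes
the `L¹` distance `d_μ` from `Q` among all `μ`-reversible nonnegative kernels `R`:
`d_μ(Q, R) ≥ d_μ(Q, M2)`. -/
theorem mh_M2_minimizes_L1 {X : Type*} [MeasurableSpace X] (ν : Measure X) [SigmaFinite ν]
    (μ : X → ℝ) (hμpos : ∀ x, 0 < μ x) (hμmeas : Measurable μ)
    (hμprob : ∫⁻ x, ENNReal.ofReal (μ x) ∂ν = 1)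
    (Q : X → X → ℝ) (hQmeas : Measurable fun p : X × X => Q p.1 p.2)
    (hQnonneg : ∀ x y, 0 ≤ Q x y)
    (hQbdd : ∃ C : ℝ, ∀ x, ∫⁻ y in {y | y ≠ x}, ENNReal.ofReal (Q x y) ∂ν ≤ ENNReal.ofReal C)
    (R : X → X → ℝ) (hRmeas : Measurable fun p : X × X => R p.1 p.2)
    (hRnonneg : ∀ x y, 0 ≤ R x y)
    (hRrev : ∀ᵐ p ∂(ν.prod ν), μ p.1 * R p.1 p.2 = μ p.2 * R p.2 p.1) :
    ∫⁻ p in {p : X × X | p.1 ≠ p.2},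
        ENNReal.ofReal (μ p.1 * |Q p.1 p.2 - max (Q p.1 p.2) (μ p.2 / μ p.1 * Q p.2 p.1)|)
        ∂(ν.prod ν)
      ≤ ∫⁻ p in {p : X × X | p.1 ≠ p.2},
          ENNReal.ofReal (μ p.1 * |Q p.1 p.2 - R p.1 p.2|) ∂(ν.prod ν) := by
  classical
  set S : Set (X × X) := {p : X × X | p.1 ≠ p.2} with hS
  set ρ : Measure (X × X) := (ν.prod ν).restrict S with hρ
  set f : X × X → ℝ≥0∞ := fun p =>
    ENNReal.ofReal (μ p.1 * |Q p.1 p.2 - max (Q p.1 p.2) (μ p.2 / μ p.1 * Q p.2 p.1)|) with hf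
  set g : X × X → ℝ≥0∞ := fun p =>
    ENNReal.ofReal (μ p.1 * |Q p.1 p.2 - R p.1 p.2|) with hg
  -- measurability
  have hQ' : Measurable fun p : X × X => Q p.2 p.1 := hQmeas.comp measurable_swap
  have hR' : Measurable fun p : X × X => R p.2 p.1 := hRmeas.comp measurable_swap
  have hμ1 : Measurable fun p : X × X => μ p.1 := hμmeas.comp measurable_fst
  have hμ2 : Measurable fun p : X × X => μ p.2 := hμmeas.comp measurable_snd
  have hfm : Measurable f := by
    apply ENNReal.measurable_ofReal.comp
    exact hμ1.mul ((hQmeas.sub (hQmeas.max ((hμ2.div hμ1).mul hQ'))).abs)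
  have hgm : Measurable g := by
    apply ENNReal.measurable_ofReal.comp
    exact hμ1.mul ((hQmeas.sub hRmeas).abs)
  -- swap invariance of ρ
  have hSswap : Prod.swap ⁻¹' S = S := by
    ext p; simp [hS, ne_comm]
  have hswap : ρ.map (MeasurableEquiv.prodComm (α := X) (β := X)) = ρ := by
    ext t ht
    rw [Measure.map_apply (MeasurableEquiv.prodComm).measurable ht]
    have hco : ⇑(MeasurableEquiv.prodComm (α := X) (β := X)) = Prod.swap := rfl
    rw [hco, hρ, Measure.restrict_apply (ht.preimage measurable_swap),
      Measure.restrict_apply ht]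
    have h1 : Prod.swap ⁻¹' t ∩ S = Prod.swap ⁻¹' (t ∩ S) := by
      rw [Set.preimage_inter, hSswap]
    rw [h1]
    have h2 : (ν.prod ν) (Prod.swap ⁻¹' (t ∩ S))
        = ((ν.prod ν).map (MeasurableEquiv.prodComm (α := X) (β := X))) (t ∩ S) := by
      rw [MeasurableEquiv.map_apply, hco]
    rw [h2]
    have h3 : (ν.prod ν).map (MeasurableEquiv.prodComm (α := X) (β := X)) = ν.prod ν := by
      have := Measure.prod_swap (μ := ν) (ν := ν)
      rw [← this]
      congr 1
    rw [h3]
  have hswapint : ∀ (F : X × X → ℝ≥0∞),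
      ∫⁻ p, F (Prod.swap p) ∂ρ = ∫⁻ p, F p ∂ρ := by
    intro F
    conv_rhs => rw [← hswap]
    rw [lintegral_map_equiv]
    rfl
  -- a.e. pointwise inequality
  have hae : ∀ᵐ p ∂ρ, f p + f (Prod.swap p) ≤ g p + g (Prod.swap p) := by
    have h0 : ∀ᵐ p ∂ρ, μ p.1 * R p.1 p.2 = μ p.2 * R p.2 p.1 :=
      ae_restrict_of_ae hRrev
    filter_upwards [h0] with p hp
    obtain ⟨x, y⟩ := p
    simp only [Prod.swap, hf, hg]
    have hx := hμpos x
    have hy := hμpos y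
    set a := μ x * Q x y with ha
    set b := μ y * Q y x with hb
    set r := μ x * R x y with hr
    have hmax1 : μ x * |Q x y - max (Q x y) (μ y / μ x * Q y x)| = |a - max a b| := by
      rw [← abs_of_pos hx, ← abs_mul, abs_of_pos hx]
      congr 1
      rw [mul_sub]
      congr 1
      rw [mul_max_of_nonneg _ _ hx.le]
      congr 1
      field_simp
      rfl
    have hmax2 : μ y * |Q y x - max (Q y x) (μ x / μ y * Q x y)| = |b - max a b| := by
      rw [← abs_of_pos hy, ← abs_mul, abs_of_pos hy]
      congr 1
      rw [mul_sub]
      congr 1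
      rw [mul_max_of_nonneg _ _ hy.le]
      rw [max_comm]
      congr 1
      field_simp
      rfl
    have hp' : μ x * R x y = μ y * R y x := hp
    have hg1 : μ x * |Q x y - R x y| = |a - r| := by
      rw [← abs_of_pos hx, ← abs_mul, mul_sub, ← ha, ← hr]
    have hg2 : μ y * |Q y x - R y x| = |b - r| := by
      rw [← abs_of_pos hy, ← abs_mul, mul_sub, ← hb, ← hp', ← hr]
    rw [hmax1, hmax2, hg1, hg2]
    have e1 : |a - max a b| = max a b - a := by
      rw [abs_sub_comm, abs_of_nonneg (by simp [le_max_left])]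
    have e2 : |b - max a b| = max a b - b := by
      rw [abs_sub_comm, abs_of_nonneg (by simp [le_max_right])]
    rw [e1, e2, ← ENNReal.ofReal_add (by simp [le_max_left]) (by simp [le_max_right]),
      ← ENNReal.ofReal_add (abs_nonneg _) (abs_nonneg _)]
    apply ENNReal.ofReal_le_ofReal
    have htri : |a - b| ≤ |a - r| + |b - r| := by
      calc |a - b| ≤ |a - r| + |r - b| := abs_sub_le a r b
        _ = |a - r| + |b - r| := by rw [abs_sub_comm r b]
    rcases le_total a b with h | h
    · rw [max_eq_right h]
      rw [abs_of_nonpos (by linarith)] at htri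
      linarith
    · rw [max_eq_left h]
      rw [abs_of_nonneg (by linarith)] at htri
      linarith
  -- assemble
  have key : (2 : ℝ≥0∞) * ∫⁻ p, f p ∂ρ ≤ 2 * ∫⁻ p, g p ∂ρ := by
    calc (2 : ℝ≥0∞) * ∫⁻ p, f p ∂ρ
        = ∫⁻ p, f p ∂ρ + ∫⁻ p, f (Prod.swap p) ∂ρ := by rw [hswapint f, two_mul]
      _ = ∫⁻ p, (f p + f (Prod.swap p)) ∂ρ :=
          (lintegral_add_left hfm _).symm
      _ ≤ ∫⁻ p, (g p + g (Prod.swap p)) ∂ρ := lintegral_mono_ae hae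
      _ = ∫⁻ p, g p ∂ρ + ∫⁻ p, g (Prod.swap p) ∂ρ :=
          lintegral_add_left hgm _
      _ = 2 * ∫⁻ p, g p ∂ρ := by rw [hswapint g, two_mul]
  have := (ENNReal.mul_le_mul_iff_right (a := 2) (by norm_num) (by norm_num)).mp key
  exact this
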